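/- Let δ ~ N(0,1), s > 0, Δ ∈ ℝ, and let σ(x) = min(max(x + 1/2, 0), 1) be the clipped linear 'sigmoid'. Then E[δ · σ(s(δ + Δ))] = s·(Φ(Δ + 1/(2s)) − Φ(Δ − 1/(2s))), where Φ is the standard normal CDF. -/

import Mathlib

open MeasureTheory ProbabilityTheory Real Set Filter
open scoped NNReal ENNReal

noncomputable def phi (x : ℝ) : ℝ := (Real.sqrt (2 * Real.pi))⁻¹ * Real.exp (-x ^ 2 / 2)

lemma phi_eq : gaussianPDFReal 0 1 = phi := by
  ext x; simp [gaussianPDFReal, phi]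

@[fun_prop]
lemma continuous_phi : Continuous phi := by
  unfold phi; fun_prop

lemma integrable_phi : Integrable phi := phi_eq ▸ integrable_gaussianPDFReal 0 1

lemma phi_nonneg (x : ℝ) : 0 ≤ phi x := phi_eq ▸ gaussianPDFReal_nonneg 0 1 x

lemma integrable_xphi : Integrable (fun x : ℝ => x * phi x) := by
  have h := (integrable_mul_exp_neg_mul_sq (b := (1/2:ℝ)) (by norm_num)).const_mul
    ((Real.sqrt (2 * Real.pi))⁻¹)
  convert h using 2 with x
  simp only [phi]; ring_nf

lemma hasDerivAt_negphi (x : ℝ) : HasDerivAt (fun y => -(phi y)) (x * phi x) x := by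
  have h : HasDerivAt (fun y : ℝ => -y ^ 2 / 2) (-x) x := by
    have := ((hasDerivAt_pow 2 x).neg).div_const 2
    exact this.congr_deriv (by norm_num; ring)
  have h2 := (h.exp).const_mul ((Real.sqrt (2 * Real.pi))⁻¹)
  have h3 := h2.neg
  unfold phi
  exact h3.congr_deriv (by ring)

lemma hasDerivAt_negxphi (x : ℝ) :
    HasDerivAt (fun y => -(y * phi y)) (x ^ 2 * phi x - phi x) x := by
  have h : HasDerivAt (fun y : ℝ => -y ^ 2 / 2) (-x) x := by
    have := ((hasDerivAt_pow 2 x).neg).div_const 2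
    exact this.congr_deriv (by norm_num; ring)
  have h2 : HasDerivAt (fun y : ℝ => y * ((Real.sqrt (2 * Real.pi))⁻¹ * Real.exp (-y ^ 2 / 2)))
      (1 * ((Real.sqrt (2 * Real.pi))⁻¹ * Real.exp (-x ^ 2 / 2))
        + x * ((Real.sqrt (2 * Real.pi))⁻¹ * (Real.exp (-x ^ 2 / 2) * (-x)))) x :=
    (hasDerivAt_id x).mul ((h.exp).const_mul _)
  have h3 := h2.neg
  unfold phi
  exact h3.congr_deriv (by ring)

lemma tendsto_phi_atTop : Tendsto phi atTop (nhds 0) := by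
  have h1 : Tendsto (fun x : ℝ => -x ^ 2 / 2) atTop atBot := by
    apply Tendsto.atBot_div_const (by norm_num : (0:ℝ) < 2)
    exact tendsto_neg_atBot_iff.mpr (tendsto_pow_atTop (by norm_num))
  have h2 := (Real.tendsto_exp_atBot.comp h1).const_mul ((Real.sqrt (2 * Real.pi))⁻¹)
  rw [mul_zero] at h2
  unfold phi
  exact h2

lemma phi_neg (x : ℝ) : phi (-x) = phi x := by simp [phi, neg_sq]

/-- The standard normal CDF `Φ`. -/
noncomputable def stdNormalCDF (t : ℝ) : ℝ := ((gaussianReal 0 1) (Set.Iic t)).toReal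

lemma stdNormalCDF_eq (t : ℝ) : stdNormalCDF t = ∫ x in Set.Iic t, phi x := by
  rw [stdNormalCDF, gaussianReal_apply_eq_integral 0 one_ne_zero, ENNReal.toReal_ofReal, phi_eq]
  rw [phi_eq]
  exact setIntegral_nonneg measurableSet_Iic (fun x _ => phi_nonneg x)

/-- For δ ~ N(0,1), s > 0, and the clipped linear sigmoid σ(x) = clip(x + 1/2, 0, 1):
`E[δ · σ(s(δ + Δ))] = s (Φ(Δ + 1/(2s)) - Φ(Δ - 1/(2s)))`. -/
theorem gaussian_clipped_sigmoid_expectation (s Δ : ℝ) (hs : 0 < s) :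
    let σ : ℝ → ℝ := fun x => min (max (x + 1 / 2) 0) 1
    ∫ δ, δ * σ (s * (δ + Δ)) ∂(gaussianReal 0 1) =
      s * (stdNormalCDF (Δ + 1 / (2 * s)) - stdNormalCDF (Δ - 1 / (2 * s))) := by
  intro σ
  set a : ℝ := -Δ - 1/(2*s) with ha_def
  set b : ℝ := -Δ + 1/(2*s) with hb_def
  have h2s : (0:ℝ) < 1/(2*s) := by positivity
  have hs2 : s * (1/(2*s)) = 1/2 := by field_simp
  have hab : a ≤ b := by rw [ha_def, hb_def]; linarith
  set F : ℝ → ℝ := fun x => phi x * (x * σ (s * (x + Δ))) with hF_def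
  -- σ bounds
  have hσ0 : ∀ y : ℝ, 0 ≤ σ y := fun y => le_min (le_max_right _ _) zero_le_one
  have hσ1 : ∀ y : ℝ, σ y ≤ 1 := fun y => min_le_right _ _
  have hσcont : Continuous σ := by
    apply Continuous.min _ continuous_const
    exact (continuous_id.add continuous_const).max continuous_const
  have hFcont : Continuous F := by
    apply continuous_phi.mul
    exact continuous_id.mul (hσcont.comp (by fun_prop))
  -- Step A: expectation as Lebesgue integral
  have hA : ∫ δ, δ * σ (s * (δ + Δ)) ∂(gaussianReal 0 1) = ∫ x, F x := by
    rw [gaussianReal_of_var_ne_zero 0 one_ne_zero]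
    have hgp : (gaussianPDF 0 1) = fun x => ((Real.toNNReal (phi x) : ℝ≥0) : ℝ≥0∞) := by
      ext x; rw [gaussianPDF, phi_eq]; rfl
    rw [hgp, integral_withDensity_eq_integral_smul
      (continuous_phi.measurable.real_toNNReal)]
    congr 1
    ext x
    rw [NNReal.smul_def, Real.coe_toNNReal _ (phi_nonneg x), smul_eq_mul]
  -- Integrability
  have hFint : Integrable F := by
    apply (integrable_xphi.abs).mono' hFcont.aestronglyMeasurable
    refine ae_of_all _ fun x => ?_
    have h1 : |σ (s * (x + Δ))| ≤ 1 := abs_le.mpr ⟨by linarith [hσ0 (s*(x+Δ))], hσ1 _⟩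
    calc ‖F x‖ = phi x * (|x| * |σ (s * (x + Δ))|) := by
          rw [hF_def]; simp [abs_mul, abs_of_nonneg (phi_nonneg x)]
      _ ≤ phi x * (|x| * 1) := by
          apply mul_le_mul_of_nonneg_left _ (phi_nonneg x)
          exact mul_le_mul_of_nonneg_left h1 (abs_nonneg x)
      _ = |x * phi x| := by
          rw [abs_mul, abs_of_nonneg (phi_nonneg x)]; ring
  -- splitting
  have split1 : ∫ x, F x = (∫ x in Iic b, F x) + ∫ x in Ioi b, F x :=
    (intervalIntegral.integral_Iic_add_Ioi hFint.integrableOn hFint.integrableOn).symm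
  have split2 : ∫ x in Iic b, F x = (∫ x in Iic a, F x) + ∫ x in Ioc a b, F x := by
    rw [← Set.Iic_union_Ioc_eq_Iic hab,
      setIntegral_union (Set.Iic_disjoint_Ioc le_rfl) measurableSet_Ioc
        hFint.integrableOn hFint.integrableOn]
  -- left piece is zero
  have hleft : ∫ x in Iic a, F x = 0 := by
    have h0 : ∀ x ∈ Iic a, F x = 0 := by
      intro x hx
      have hx' : x + Δ ≤ -(1/(2*s)) := by simp only [Set.mem_Iic] at hx; rw [ha_def] at hx; linarith
      have : s * (x + Δ) ≤ -(1/2) := by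
        have := mul_le_mul_of_nonneg_left hx' hs.le
        rw [mul_neg, hs2] at this
        linarith
      have hσz : σ (s * (x + Δ)) = 0 := by
        simp only [σ]
        rw [max_eq_right (by linarith), min_eq_left zero_le_one]
      rw [hF_def]; simp [hσz]
    rw [setIntegral_congr_fun measurableSet_Iic h0, integral_zero]
  -- right piece
  have hright : ∫ x in Ioi b, F x = phi b := by
    have h1 : ∀ x ∈ Ioi b, F x = x * phi x := by
      intro x hx
      have hx' : 1/(2*s) ≤ x + Δ := by simp only [Set.mem_Ioi] at hx; rw [hb_def] at hx; linarith
      have : (1:ℝ)/2 ≤ s * (x + Δ) := by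
        have := mul_le_mul_of_nonneg_left hx' hs.le
        rw [hs2] at this; linarith
      have hσ : σ (s * (x + Δ)) = 1 := by
        simp only [σ]
        rw [max_eq_left (by linarith), min_eq_right (by linarith)]
      rw [hF_def]; simp [hσ]; ring
    rw [setIntegral_congr_fun measurableSet_Ioi h1]
    have := integral_Ioi_of_hasDerivAt_of_tendsto
      (f := fun y => -(phi y)) (f' := fun x => x * phi x) (a := b) (m := 0)
      (continuous_phi.neg.continuousWithinAt)
      (fun x _ => hasDerivAt_negphi x)
      integrable_xphi.integrableOn
      (by simpa using tendsto_phi_atTop.neg)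
    rw [this]; ring
  -- middle piece
  have hmid : ∫ x in Ioc a b, F x
      = s * ((-(b * phi b)) - (-(a * phi a))) + s * (∫ x in a..b, phi x)
        + (s*Δ + 1/2) * ((-(phi b)) - (-(phi a))) := by
    rw [← intervalIntegral.integral_of_le hab]
    have h1 : ∀ x ∈ Set.uIcc a b, F x
        = s * (x^2 * phi x - phi x) + s * phi x + (s*Δ + 1/2) * (x * phi x) := by
      intro x hx
      rw [Set.uIcc_of_le hab] at hx
      obtain ⟨hxa, hxb⟩ := hx
      have hl : -(1/(2*s)) ≤ x + Δ := by rw [ha_def] at hxa; linarith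
      have hr : x + Δ ≤ 1/(2*s) := by rw [hb_def] at hxb; linarith
      have hL : -(1/2) ≤ s * (x + Δ) := by
        have := mul_le_mul_of_nonneg_left hl hs.le
        rw [mul_neg, hs2] at this; linarith
      have hR : s * (x + Δ) ≤ 1/2 := by
        have := mul_le_mul_of_nonneg_left hr hs.le
        rw [hs2] at this; linarith
      have hσ : σ (s * (x + Δ)) = s * (x + Δ) + 1/2 := by
        simp only [σ]
        rw [max_eq_left (by linarith), min_eq_left (by linarith)]
      rw [hF_def]; simp only [hσ]; ring
    rw [intervalIntegral.integral_congr h1]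
    have i1 : IntervalIntegrable (fun x : ℝ => x^2 * phi x - phi x) volume a b :=
      (Continuous.intervalIntegrable (by fun_prop) a b)
    have i2 : IntervalIntegrable phi volume a b := continuous_phi.intervalIntegrable a b
    have i3 : IntervalIntegrable (fun x : ℝ => x * phi x) volume a b :=
      (Continuous.intervalIntegrable (by fun_prop) a b)
    rw [intervalIntegral.integral_add (((i1.const_mul s).add (i2.const_mul s)))
        (i3.const_mul _),
      intervalIntegral.integral_add (i1.const_mul s) (i2.const_mul s),
      intervalIntegral.integral_const_mul, intervalIntegral.integral_const_mul,
      intervalIntegral.integral_const_mul]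
    rw [intervalIntegral.integral_eq_sub_of_hasDerivAt (fun x _ => hasDerivAt_negxphi x) i1,
      intervalIntegral.integral_eq_sub_of_hasDerivAt (fun x _ => hasDerivAt_negphi x) i3]
  -- CDF difference
  have hΦ : stdNormalCDF (Δ + 1 / (2 * s)) - stdNormalCDF (Δ - 1 / (2 * s))
      = ∫ x in a..b, phi x := by
    rw [stdNormalCDF_eq, stdNormalCDF_eq,
      intervalIntegral.integral_Iic_sub_Iic integrable_phi.integrableOn integrable_phi.integrableOn]
    have hcongr : ∫ x in (Δ - 1/(2*s))..(Δ + 1/(2*s)), phi x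
        = ∫ x in (Δ - 1/(2*s))..(Δ + 1/(2*s)), phi (-x) := by
      simp [phi_neg]
    rw [hcongr, intervalIntegral.integral_comp_neg]
    have e1 : -(Δ + 1/(2*s)) = a := by rw [ha_def]; try ring
    have e2 : -(Δ - 1/(2*s)) = b := by rw [hb_def]; try ring
    rw [e1, e2]
  -- assemble
  have ha' : s * a = -(s*Δ) - 1/2 := by rw [ha_def]; linear_combination -hs2
  have hb' : s * b = -(s*Δ) + 1/2 := by rw [hb_def]; linear_combination hs2
  rw [hA, split1, split2, hleft, hright, hmid, hΦ]
  linear_combination phi a * ha' - phi b * hb'
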